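/- A buyer excluded under truthful bidding who deviates to win cannot profit in the threshold-price case: if buyer K+1 (with truthful value b_{K+1} < a_{K+1}) raises her bid so as to be among the traders, then any price she could pay in the resulting McAfee outcome is at least min(p₀, a_{K+1}) > b_{K+1}; in particular, in the original threshold-price outcome her value b_{K+1} is strictly below the market price p₀, so winning at any price weakly above p₀ yields strictly negative utility. -/

import Mathlib

open Classical Finset

/-- The `k`-th highest bid (1-indexed) of an arbitrary bid profile `b`,
obtained by sorting `b` in descending order with Mathlib's fixed
tie-breaking order (`0` out of range). -/
noncomputable def nthBidDesc {n : ℕ} (b : Fin n → ℝ) (k : ℕ) : ℝ :=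
  if h : k - 1 < n then b (Tuple.sort (fun i => -b i) ⟨k - 1, h⟩) else 0

/-- The `k`-th lowest ask (1-indexed) of an arbitrary ask profile `a`,
obtained by sorting `a` in ascending order with Mathlib's fixed
tie-breaking order (`0` out of range). -/
noncomputable def nthAskAsc {n : ℕ} (a : Fin n → ℝ) (k : ℕ) : ℝ :=
  if h : k - 1 < n then a (Tuple.sort a ⟨k - 1, h⟩) else 0

/-- The breakeven index: the largest `k ∈ {1, …, min V M}` such that the
`k`-th highest bid is at least the `k`-th lowest ask (`0` if none). -/
noncomputable def mcafeeK (V M : ℕ) (b : Fin V → ℝ) (a : Fin M → ℝ) : ℕ :=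
  ((Finset.Icc 1 (min V M)).filter (fun k => nthAskAsc a k ≤ nthBidDesc b k)).sup id

/-- The McAfee candidate price `p₀ = (b_{K+1} + a_{K+1})/2`. -/
noncomputable def mcafeeP0 (V M : ℕ) (b : Fin V → ℝ) (a : Fin M → ℝ) : ℝ :=
  (nthBidDesc b (mcafeeK V M b a + 1) + nthAskAsc a (mcafeeK V M b a + 1)) / 2

/-- Whether the threshold-price case of McAfee's auction applies:
`K ≥ 1`, `K < min V M` (so `p₀` is defined) and `a_K ≤ p₀ ≤ b_K`. -/
def mcafeeThreshold (V M : ℕ) (b : Fin V → ℝ) (a : Fin M → ℝ) : Prop :=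
  1 ≤ mcafeeK V M b a ∧ mcafeeK V M b a + 1 ≤ min V M ∧
    nthAskAsc a (mcafeeK V M b a) ≤ mcafeeP0 V M b a ∧
    mcafeeP0 V M b a ≤ nthBidDesc b (mcafeeK V M b a)

/-- Number of trades executed by McAfee's mechanism: `K` in the
threshold-price case, `K − 1` otherwise (trade reduction). -/
noncomputable def mcafeeQ (V M : ℕ) (b : Fin V → ℝ) (a : Fin M → ℝ) : ℕ :=
  if mcafeeThreshold V M b a then mcafeeK V M b a else mcafeeK V M b a - 1

/-- Price paid by each trading buyer: `p₀` in the threshold-price case,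
`b_K` in the trade-reduction case. -/
noncomputable def mcafeeBuyerPrice (V M : ℕ) (b : Fin V → ℝ) (a : Fin M → ℝ) : ℝ :=
  if mcafeeThreshold V M b a then mcafeeP0 V M b a
  else nthBidDesc b (mcafeeK V M b a)

/-- Price received by each trading seller: `p₀` in the threshold-price case,
`a_K` in the trade-reduction case. -/
noncomputable def mcafeeSellerPrice (V M : ℕ) (b : Fin V → ℝ) (a : Fin M → ℝ) : ℝ :=
  if mcafeeThreshold V M b a then mcafeeP0 V M b a
  else nthAskAsc a (mcafeeK V M b a)

/-- The (1-indexed) rank of buyer `i` in the descending order of bids,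
using the fixed tie-breaking order of `Tuple.sort`. -/
noncomputable def buyerRank {V : ℕ} (b : Fin V → ℝ) (i : Fin V) : ℕ :=
  ((Tuple.sort (fun j => -b j)).symm i : ℕ) + 1

/-- The (1-indexed) rank of seller `j` in the ascending order of asks,
using the fixed tie-breaking order of `Tuple.sort`. -/
noncomputable def sellerRank {M : ℕ} (a : Fin M → ℝ) (j : Fin M) : ℕ :=
  ((Tuple.sort a).symm j : ℕ) + 1

/-- Buyer `i` trades iff she is among the `q` highest-ranked buyers. -/
def buyerTrades (V M : ℕ) (b : Fin V → ℝ) (a : Fin M → ℝ) (i : Fin V) : Prop :=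
  buyerRank b i ≤ mcafeeQ V M b a

/-- Seller `j` trades iff she is among the `q` lowest-ranked sellers. -/
def sellerTrades (V M : ℕ) (b : Fin V → ℝ) (a : Fin M → ℝ) (j : Fin M) : Prop :=
  sellerRank a j ≤ mcafeeQ V M b a

/-- Utility of buyer `i` with true valuation `u` under McAfee's outcome for
the profile `(b, a)`: `u` minus the price paid if she trades, `0` otherwise. -/
noncomputable def buyerUtility (V M : ℕ) (b : Fin V → ℝ) (a : Fin M → ℝ)
    (i : Fin V) (u : ℝ) : ℝ :=
  if buyerTrades V M b a i then u - mcafeeBuyerPrice V M b a else 0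

/-- Utility of seller `j` with true cost `c` under McAfee's outcome for the
profile `(b, a)`: payment received minus `c` if she trades, `0` otherwise. -/
noncomputable def sellerUtility (V M : ℕ) (b : Fin V → ℝ) (a : Fin M → ℝ)
    (j : Fin M) (c : ℝ) : ℝ :=
  if sellerTrades V M b a j then mcafeeSellerPrice V M b a - c else 0


private lemma le_nthBidDesc_iff {n : ℕ} (b : Fin n → ℝ) {k : ℕ} (hk : k - 1 < n) (t : ℝ) :
    t ≤ nthBidDesc b k ↔ k - 1 < Fintype.card {i // t ≤ b i} := by
  classical
  have hanti : Antitone (b ∘ Tuple.sort (fun i => -b i)) := by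
    intro x y hxy
    have := Tuple.monotone_sort (fun i => -b i) hxy
    simpa using this
  have h := Tuple.lt_card_ge_iff_apply_ge_of_antitone
    (f := b ∘ Tuple.sort (fun i => -b i)) (a := t) (j := ⟨k - 1, hk⟩) hanti
  rw [← Fintype.card_subtype] at h
  have hcard : Fintype.card {i // t ≤ (b ∘ Tuple.sort (fun i => -b i)) i}
      = Fintype.card {i // t ≤ b i} :=
    Fintype.card_congr ((Tuple.sort (fun i => -b i)).subtypeEquiv (fun i => Iff.rfl))
  rw [nthBidDesc, dif_pos hk]
  rw [hcard] at h
  exact h.symm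

private lemma nthBidDesc_lt_iff {n : ℕ} (b : Fin n → ℝ) {k : ℕ} (hk : k - 1 < n) (t : ℝ) :
    nthBidDesc b k < t ↔ Fintype.card {i // t ≤ b i} ≤ k - 1 := by
  rw [← not_le, le_nthBidDesc_iff b hk, not_lt]

private lemma nthAskAsc_le_iff {n : ℕ} (a : Fin n → ℝ) {k : ℕ} (hk : k - 1 < n) (t : ℝ) :
    nthAskAsc a k ≤ t ↔ k - 1 < Fintype.card {i // a i ≤ t} := by
  classical
  have h := Tuple.lt_card_le_iff_apply_le_of_monotone
    (f := a ∘ Tuple.sort a) (a := t) (j := ⟨k - 1, hk⟩) (Tuple.monotone_sort a)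
  rw [← Fintype.card_subtype] at h
  have hcard : Fintype.card {i // (a ∘ Tuple.sort a) i ≤ t}
      = Fintype.card {i // a i ≤ t} :=
    Fintype.card_congr ((Tuple.sort a).subtypeEquiv (fun i => Iff.rfl))
  rw [nthAskAsc, dif_pos hk]
  rw [hcard] at h
  exact h.symm

private lemma nthBidDesc_anti {n : ℕ} (b : Fin n → ℝ) {k l : ℕ} (hk : 1 ≤ k) (hkl : k ≤ l)
    (hl : l - 1 < n) : nthBidDesc b l ≤ nthBidDesc b k := by
  have hk' : k - 1 < n := lt_of_le_of_lt (Nat.sub_le_sub_right hkl 1) hl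
  rw [nthBidDesc, nthBidDesc, dif_pos hl, dif_pos hk']
  have h := Tuple.monotone_sort (fun i => -b i)
    (a := ⟨k - 1, hk'⟩) (b := ⟨l - 1, hl⟩) (Nat.sub_le_sub_right hkl 1)
  simpa using h

private lemma nthAskAsc_mono {n : ℕ} (a : Fin n → ℝ) {k l : ℕ} (hk : 1 ≤ k) (hkl : k ≤ l)
    (hl : l - 1 < n) : nthAskAsc a k ≤ nthAskAsc a l := by
  have hk' : k - 1 < n := lt_of_le_of_lt (Nat.sub_le_sub_right hkl 1) hl
  rw [nthAskAsc, nthAskAsc, dif_pos hl, dif_pos hk']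
  exact Tuple.monotone_sort a
    (a := (⟨k - 1, hk'⟩ : Fin n)) (b := ⟨l - 1, hl⟩) (Nat.sub_le_sub_right hkl 1)

private lemma nthBidDesc_buyerRank {n : ℕ} (b : Fin n → ℝ) (i : Fin n) :
    nthBidDesc b (buyerRank b i) = b i := by
  rw [nthBidDesc, buyerRank]
  have h : ((Tuple.sort fun j => -b j).symm i : ℕ) + 1 - 1 < n := by
    simpa using ((Tuple.sort fun j => -b j).symm i).isLt
  rw [dif_pos h]
  have he : (⟨((Tuple.sort fun j => -b j).symm i : ℕ) + 1 - 1, h⟩ : Fin n)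
      = (Tuple.sort fun j => -b j).symm i := by
    ext; simp
  rw [he, Equiv.apply_symm_apply]

/-- A buyer excluded under truthful bidding (her truthful bid is
the `(K+1)`-st highest, so her value is `b_{K+1} < a_{K+1}`) who deviates so
as to be among the traders cannot profit in the threshold-price case: any
price she could pay in the McAfee outcome resulting from her deviation is at
least `min(p₀, a_{K+1}) > b_{K+1}`; in particular her value `b_{K+1}` is
strictly below the original market price `p₀`, so winning at any price weakly
above `p₀` yields strictly negative utility. -/
theorem stmt_15 (V M : ℕ) (b : Fin V → ℝ) (a : Fin M → ℝ) (i : Fin V)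
    (K : ℕ) (hK : K = mcafeeK V M b a)
    (hK1 : 1 ≤ K) (hKlt : K + 1 ≤ min V M)
    (hrank : buyerRank b i = K + 1)
    (hlt : nthBidDesc b (K + 1) < nthAskAsc a (K + 1))
    (p₀ : ℝ) (hp₀ : p₀ = (nthBidDesc b (K + 1) + nthAskAsc a (K + 1)) / 2)
    (hth : nthAskAsc a K ≤ p₀ ∧ p₀ ≤ nthBidDesc b K) :
    (∀ v : ℝ, buyerTrades V M (Function.update b i v) a i →
        min p₀ (nthAskAsc a (K + 1)) ≤
          mcafeeBuyerPrice V M (Function.update b i v) a) ∧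
    nthBidDesc b (K + 1) < min p₀ (nthAskAsc a (K + 1)) ∧
    nthBidDesc b (K + 1) < p₀ ∧
    (∀ p : ℝ, p₀ ≤ p → nthBidDesc b (K + 1) - p < 0) := by
  classical
  have hbi : b i = nthBidDesc b (K + 1) := by rw [← hrank, nthBidDesc_buyerRank]
  have hKV : K + 1 ≤ V := le_trans hKlt (min_le_left _ _)
  have hKM : K + 1 ≤ M := le_trans hKlt (min_le_right _ _)
  have hp0top : nthBidDesc b (K + 1) < p₀ := by rw [hp₀]; linarith
  have hmin : nthBidDesc b (K + 1) < min p₀ (nthAskAsc a (K + 1)) := lt_min hp0top hlt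
  refine ⟨?_, hmin, hp0top, fun p hp => by linarith⟩
  intro v htrade
  set b' := Function.update b i v with hb'
  have hKsub : (K : ℕ) + 1 - 1 < V := by omega
  have hKsub' : (K : ℕ) - 1 < V := by omega
  have hcount1 : K < Fintype.card {j // nthBidDesc b (K + 1) ≤ b j} := by
    have := (le_nthBidDesc_iff b hKsub (nthBidDesc b (K + 1))).mp le_rfl
    simpa using this
  have hcount2 : Fintype.card {j // nthAskAsc a (K + 1) ≤ b j} ≤ K := by
    have := (nthBidDesc_lt_iff b hKsub (nthAskAsc a (K + 1))).mp hlt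
    simpa using this
  have hbK : ∀ k, 1 ≤ k → k ≤ K → nthBidDesc b (K + 1) < nthBidDesc b k := by
    intro k h1 h2
    calc nthBidDesc b (K + 1) < p₀ := hp0top
      _ ≤ nthBidDesc b K := hth.2
      _ ≤ nthBidDesc b k := nthBidDesc_anti b h1 h2 hKsub'
  -- the K highest deviated bids only rise
  have hBle : ∀ k, 1 ≤ k → k ≤ K → nthBidDesc b k ≤ nthBidDesc b' k := by
    intro k h1 h2
    have hkV : k - 1 < V := by omega
    rw [le_nthBidDesc_iff b' hkV]
    refine lt_of_lt_of_le ((le_nthBidDesc_iff b hkV (nthBidDesc b k)).mp le_rfl) ?_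
    refine Fintype.card_subtype_mono _ _ (fun j hj => ?_)
    rcases eq_or_ne j i with rfl | hne
    · exact absurd hj (not_le.mpr (hbi ▸ hbK k h1 h2))
    · rwa [hb', Function.update_of_ne hne]
  have hmemK : K ∈ (Finset.Icc 1 (min V M)).filter
      (fun k => nthAskAsc a k ≤ nthBidDesc b' k) := by
    rw [Finset.mem_filter, Finset.mem_Icc]
    exact ⟨⟨hK1, by omega⟩,
      le_trans (le_trans hth.1 hth.2) (hBle K hK1 le_rfl)⟩
  have hK'ge : K ≤ mcafeeK V M b' a := by
    rw [mcafeeK]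
    exact Finset.le_sup (f := id) hmemK
  have hK'le : mcafeeK V M b' a ≤ K + 1 := by
    rw [mcafeeK]
    apply Finset.sup_le
    intro k hk
    rw [Finset.mem_filter, Finset.mem_Icc] at hk
    by_contra hc
    have hk2 : K + 2 ≤ k := by simp only [id] at hc; omega
    have hkM : k - 1 < M := by omega
    have hkV : k - 1 < V := by omega
    have hak : nthAskAsc a (K + 1) ≤ nthAskAsc a k :=
      nthAskAsc_mono a (by omega) (by omega) hkM
    have hlt' : nthBidDesc b' k < nthAskAsc a k := by
      rw [nthBidDesc_lt_iff b' hkV]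
      have hsub : Fintype.card {j // nthAskAsc a k ≤ b' j}
          ≤ Fintype.card {j // nthAskAsc a (K + 1) ≤ b j ∨ j = i} := by
        refine Fintype.card_subtype_mono _ _ (fun j hj => ?_)
        rcases eq_or_ne j i with rfl | hne
        · exact Or.inr rfl
        · exact Or.inl (le_trans hak (by rwa [hb', Function.update_of_ne hne] at hj))
      have hsub2 : Fintype.card {j // nthAskAsc a (K + 1) ≤ b j ∨ j = i}
          ≤ Fintype.card {j // nthAskAsc a (K + 1) ≤ b j} + 1 := by
        rw [Fintype.card_subtype, Fintype.card_subtype]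
        refine le_trans (Finset.card_le_card (fun j hj => ?_))
          (Finset.card_insert_le i _)
        simp only [Finset.mem_filter, Finset.mem_univ, true_and, Finset.mem_insert] at hj ⊢
        tauto
      omega
    exact absurd hk.2 (not_le.mpr hlt')
  have hQrw : mcafeeK V M b' a = K ∨ mcafeeK V M b' a = K + 1 := by omega
  have hfne : ((Finset.Icc 1 (min V M)).filter
      (fun k => nthAskAsc a k ≤ nthBidDesc b' k)).Nonempty := ⟨K, hmemK⟩
  have hK'mem : mcafeeK V M b' a ∈ (Finset.Icc 1 (min V M)).filter
      (fun k => nthAskAsc a k ≤ nthBidDesc b' k) := by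
    obtain ⟨m, hm, hms⟩ := Finset.exists_mem_eq_sup _ hfne (id : ℕ → ℕ)
    rw [mcafeeK, hms]
    exact hm
  by_cases hth' : mcafeeThreshold V M b' a
  · rcases hQrw with hKe | hKe
    · -- K' = K, threshold case: price is p₀' ≥ p₀
      -- buyer i trades, so her rank is ≤ K, hence v ≥ b'_K ≥ b_K ≥ b_{K+1}
      have hQ : mcafeeQ V M b' a = K := by rw [mcafeeQ, if_pos hth', hKe]
      have htr : buyerRank b' i ≤ K := by
        have := htrade
        rwa [buyerTrades, hQ] at this
      have hv1 : nthBidDesc b' (buyerRank b' i) = b' i := nthBidDesc_buyerRank b' i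
      have hrge1 : 1 ≤ buyerRank b' i := by rw [buyerRank]; omega
      have hvK : nthBidDesc b' K ≤ b' i := by
        rw [← hv1]
        exact nthBidDesc_anti b' hrge1 htr hKsub'
      have hvb : nthBidDesc b (K + 1) ≤ b' i := by
        calc nthBidDesc b (K + 1) ≤ p₀ := le_of_lt hp0top
          _ ≤ nthBidDesc b K := hth.2
          _ ≤ nthBidDesc b' K := hBle K hK1 le_rfl
          _ ≤ b' i := hvK
      have hB'K1 : nthBidDesc b (K + 1) ≤ nthBidDesc b' (K + 1) := by
        rw [le_nthBidDesc_iff b' hKsub]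
        have hmono : Fintype.card {j // nthBidDesc b (K + 1) ≤ b j}
            ≤ Fintype.card {j // nthBidDesc b (K + 1) ≤ b' j} := by
          refine Fintype.card_subtype_mono _ _ (fun j hj => ?_)
          rcases eq_or_ne j i with rfl | hne
          · exact hvb
          · rwa [hb', Function.update_of_ne hne]
        simpa using lt_of_lt_of_le hcount1 hmono
      rw [mcafeeBuyerPrice, if_pos hth', mcafeeP0, hKe, hp₀]
      have := min_le_left p₀ (nthAskAsc a (K + 1))
      rw [hp₀] at this
      linarith
    · -- K' = K+1, threshold case: a_{K+1} ≤ p₀' = price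
      have h1 := hth'.2.2.1
      rw [hKe] at h1
      rw [mcafeeBuyerPrice, if_pos hth']
      exact le_trans (min_le_right _ _) h1
  · rcases hQrw with hKe | hKe
    · -- K' = K, trade reduction: price = b'_K ≥ b_K ≥ p₀
      rw [mcafeeBuyerPrice, if_neg hth', hKe]
      calc min p₀ (nthAskAsc a (K + 1)) ≤ p₀ := min_le_left _ _
        _ ≤ nthBidDesc b K := hth.2
        _ ≤ nthBidDesc b' K := hBle K hK1 le_rfl
    · -- K' = K+1, trade reduction: price = b'_{K+1} ≥ a_{K+1}
      rw [Finset.mem_filter] at hK'mem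
      have h2 := hK'mem.2
      rw [hKe] at h2
      rw [mcafeeBuyerPrice, if_neg hth', hKe]
      exact le_trans (min_le_right _ _) h2
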